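/- Define the vector field 𝔙 = (𝔙_x, 𝔙_y) on ℝ² by 𝔙_x(x,y) = −cos y + √3·sin(x/2)·sin(√3·y/2) + cos(√3·x/2)·cos(y/2) and 𝔙_y(x,y) = 𝔙_x(y,x) = −cos x + √3·sin(y/2)·sin(√3·x/2) + cos(√3·y/2)·cos(x/2). Then 𝔙 satisfies the vector Helmholtz equation Δ𝔙 = −𝔙 (componentwise, i.e. Δ𝔙_x = −𝔙_x and Δ𝔙_y = −𝔙_y) and is solenoidal: ∂𝔙_x/∂x + ∂𝔙_y/∂y = 0. -/

import Mathlib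

noncomputable section

open Real

/-- Partial derivative in the `i`-th coordinate direction, on ℝ². -/
def pd2 (i : Fin 2) (F : (Fin 2 → ℝ) → ℝ) : (Fin 2 → ℝ) → ℝ :=
  fun v => deriv (fun t => F (Function.update v i t)) (v i)

/-- Laplacian of a scalar function on ℝ². -/
def lap2 (F : (Fin 2 → ℝ) → ℝ) : (Fin 2 → ℝ) → ℝ :=
  fun v => pd2 0 (pd2 0 F) v + pd2 1 (pd2 1 F) v

/-- Divergence of a vector field on ℝ². -/
def div2 (V : (Fin 2 → ℝ) → (Fin 2 → ℝ)) : (Fin 2 → ℝ) → ℝ :=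
  fun v => pd2 0 (fun w => V w 0) v + pd2 1 (fun w => V w 1) v

/-- The first component of the dihedral lambent field `𝔙`. -/
def Vx : ℝ → ℝ → ℝ := fun x y =>
  -Real.cos y + Real.sqrt 3 * Real.sin (x / 2) * Real.sin (Real.sqrt 3 * y / 2)
    + Real.cos (Real.sqrt 3 * x / 2) * Real.cos (y / 2)

/-- The dihedral lambent vector field `𝔙 = (𝔙ₓ(x,y), 𝔙ₓ(y,x))`. -/
def Vfield : (Fin 2 → ℝ) → (Fin 2 → ℝ) := fun v => ![Vx (v 0) (v 1), Vx (v 1) (v 0)]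

/- ## Auxiliary derivative computations -/

lemma hd_half (t : ℝ) : HasDerivAt (fun s : ℝ => s / 2) (1/2) t := by
  simpa using (hasDerivAt_id t).div_const 2

lemma hd_c (a t : ℝ) : HasDerivAt (fun s : ℝ => a * s / 2) (a/2) t := by
  simpa using ((hasDerivAt_id t).const_mul a).div_const 2

/-- `∂Vx/∂x`. -/
def Dx (x y : ℝ) : ℝ := Real.sqrt 3 / 2 * Real.cos (x/2) * Real.sin (Real.sqrt 3 * y/2)
  - Real.sqrt 3 / 2 * Real.sin (Real.sqrt 3 * x/2) * Real.cos (y/2)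

/-- `∂Vx/∂y`. -/
def Dy (x y : ℝ) : ℝ := Real.sin y + 3/2 * Real.sin (x/2) * Real.cos (Real.sqrt 3 * y/2)
  - 1/2 * Real.cos (Real.sqrt 3 * x/2) * Real.sin (y/2)

lemma sq3 : Real.sqrt 3 * Real.sqrt 3 = 3 := Real.mul_self_sqrt (by norm_num)

lemma hVx_x (y x : ℝ) : HasDerivAt (fun x => Vx x y) (Dx x y) x := by
  have h1 : HasDerivAt (fun x : ℝ => Real.sin (x/2)) (Real.cos (x/2) * (1/2)) x :=
    (Real.hasDerivAt_sin _).comp x (hd_half x)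
  have h2 : HasDerivAt (fun x : ℝ => Real.cos (Real.sqrt 3 * x / 2))
      (-Real.sin (Real.sqrt 3 * x/2) * (Real.sqrt 3/2)) x :=
    (Real.hasDerivAt_cos _).comp x (hd_c _ x)
  have := (((hasDerivAt_const x (-Real.cos y)).add
      ((h1.const_mul (Real.sqrt 3)).mul_const (Real.sin (Real.sqrt 3 * y / 2)))).add
      (h2.mul_const (Real.cos (y/2))))
  refine this.congr_deriv (Eq.symm ?_)
  unfold Dx; ring

lemma hVx_y (x y : ℝ) : HasDerivAt (fun y => Vx x y) (Dy x y) y := by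
  have h0 : HasDerivAt (fun y : ℝ => -Real.cos y) (Real.sin y) y := by
    exact (Real.hasDerivAt_cos y).neg.congr_deriv (neg_neg _)
  have h1 : HasDerivAt (fun y : ℝ => Real.sin (Real.sqrt 3 * y / 2))
      (Real.cos (Real.sqrt 3 * y/2) * (Real.sqrt 3/2)) y :=
    (Real.hasDerivAt_sin _).comp y (hd_c _ y)
  have h2 : HasDerivAt (fun y : ℝ => Real.cos (y/2)) (-Real.sin (y/2) * (1/2)) y :=
    (Real.hasDerivAt_cos _).comp y (hd_half y)
  have := ((h0.add (h1.const_mul (Real.sqrt 3 * Real.sin (x/2)))).add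
      (h2.const_mul (Real.cos (Real.sqrt 3 * x / 2))))
  have e : (fun y => Vx x y) = fun y => -Real.cos y
      + Real.sqrt 3 * Real.sin (x/2) * Real.sin (Real.sqrt 3 * y / 2)
      + Real.cos (Real.sqrt 3 * x / 2) * Real.cos (y/2) := by
    funext y; unfold Vx; ring
  rw [e]
  refine this.congr_deriv (Eq.symm ?_)
  unfold Dy
  linear_combination (-(Real.sin (x/2) * Real.cos (Real.sqrt 3 * y/2)) / 2) * sq3

/-- `∂²Vx/∂x²`. -/
def Dxx (x y : ℝ) : ℝ := -(Real.sqrt 3/4) * Real.sin (x/2) * Real.sin (Real.sqrt 3 * y/2)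
  - 3/4 * Real.cos (Real.sqrt 3 * x/2) * Real.cos (y/2)

/-- `∂²Vx/∂y²`. -/
def Dyy (x y : ℝ) : ℝ := Real.cos y
  - 3*Real.sqrt 3/4 * Real.sin (x/2) * Real.sin (Real.sqrt 3 * y/2)
  - 1/4 * Real.cos (Real.sqrt 3 * x/2) * Real.cos (y/2)

lemma hDx_x (y x : ℝ) : HasDerivAt (fun x => Dx x y) (Dxx x y) x := by
  have h1 : HasDerivAt (fun x : ℝ => Real.cos (x/2)) (-Real.sin (x/2) * (1/2)) x :=
    (Real.hasDerivAt_cos _).comp x (hd_half x)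
  have h2 : HasDerivAt (fun x : ℝ => Real.sin (Real.sqrt 3 * x / 2))
      (Real.cos (Real.sqrt 3 * x/2) * (Real.sqrt 3/2)) x :=
    (Real.hasDerivAt_sin _).comp x (hd_c _ x)
  have := ((h1.const_mul (Real.sqrt 3/2)).mul_const (Real.sin (Real.sqrt 3 * y/2))).sub
      ((h2.const_mul (Real.sqrt 3/2)).mul_const (Real.cos (y/2)))
  have e : (fun x => Dx x y) = fun x =>
      Real.sqrt 3 / 2 * Real.cos (x/2) * Real.sin (Real.sqrt 3 * y/2)
      - Real.sqrt 3 / 2 * Real.sin (Real.sqrt 3 * x/2) * Real.cos (y/2) := rfl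
  rw [e]
  refine this.congr_deriv (Eq.symm ?_)
  unfold Dxx
  linear_combination (Real.cos (Real.sqrt 3 * x/2) * Real.cos (y/2) / 4) * sq3

lemma hDy_y (x y : ℝ) : HasDerivAt (fun y => Dy x y) (Dyy x y) y := by
  have h0 : HasDerivAt Real.sin (Real.cos y) y := Real.hasDerivAt_sin y
  have h1 : HasDerivAt (fun y : ℝ => Real.cos (Real.sqrt 3 * y / 2))
      (-Real.sin (Real.sqrt 3 * y/2) * (Real.sqrt 3/2)) y :=
    (Real.hasDerivAt_cos _).comp y (hd_c _ y)
  have h2 : HasDerivAt (fun y : ℝ => Real.sin (y/2)) (Real.cos (y/2) * (1/2)) y :=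
    (Real.hasDerivAt_sin _).comp y (hd_half y)
  have := (h0.add (h1.const_mul ((3:ℝ)/2 * Real.sin (x/2)))).sub
      (h2.const_mul ((1:ℝ)/2 * Real.cos (Real.sqrt 3 * x/2)))
  have e : (fun y => Dy x y) = fun y => Real.sin y
      + 3/2 * Real.sin (x/2) * Real.cos (Real.sqrt 3 * y/2)
      - 1/2 * Real.cos (Real.sqrt 3 * x/2) * Real.sin (y/2) := by
    funext y; unfold Dy; ring
  rw [e]
  refine this.congr_deriv (Eq.symm ?_)
  unfold Dyy
  ring

/- ## Reducing `pd2` to one-variable derivatives -/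

lemma pd2_0_eq (f : ℝ → ℝ → ℝ) (v : Fin 2 → ℝ) :
    pd2 0 (fun w => f (w 0) (w 1)) v = deriv (fun t => f t (v 1)) (v 0) := by
  unfold pd2
  congr 1

lemma pd2_1_eq (f : ℝ → ℝ → ℝ) (v : Fin 2 → ℝ) :
    pd2 1 (fun w => f (w 0) (w 1)) v = deriv (fun t => f (v 0) t) (v 1) := by
  unfold pd2
  congr 1

lemma pd2_0_eq' (f : ℝ → ℝ → ℝ) (v : Fin 2 → ℝ) :
    pd2 0 (fun w => f (w 1) (w 0)) v = deriv (fun t => f (v 1) t) (v 0) := by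
  unfold pd2
  congr 1

lemma pd2_1_eq' (f : ℝ → ℝ → ℝ) (v : Fin 2 → ℝ) :
    pd2 1 (fun w => f (w 1) (w 0)) v = deriv (fun t => f t (v 0)) (v 1) := by
  unfold pd2
  congr 1

/- ## First-derivative function identities -/

lemma pd2_0_Vx : pd2 0 (fun w => Vx (w 0) (w 1)) = fun w => Dx (w 0) (w 1) := by
  funext w; rw [pd2_0_eq]; exact (hVx_x _ _).deriv

lemma pd2_1_Vx : pd2 1 (fun w => Vx (w 0) (w 1)) = fun w => Dy (w 0) (w 1) := by
  funext w; rw [pd2_1_eq]; exact (hVx_y _ _).deriv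

lemma pd2_0_Vx' : pd2 0 (fun w => Vx (w 1) (w 0)) = fun w => Dy (w 1) (w 0) := by
  funext w; rw [pd2_0_eq']; exact (hVx_y _ _).deriv

lemma pd2_1_Vx' : pd2 1 (fun w => Vx (w 1) (w 0)) = fun w => Dx (w 1) (w 0) := by
  funext w; rw [pd2_1_eq']; exact (hVx_x _ _).deriv

lemma lap_sum (x y : ℝ) : Dxx x y + Dyy x y = -(Vx x y) := by
  unfold Dxx Dyy Vx; ring

/-- `𝔙` satisfies the vector Helmholtz equation `Δ𝔙 = -𝔙` componentwise
and is solenoidal. -/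
theorem dihedral_V_helmholtz_solenoidal :
    (∀ v, lap2 (fun w => Vfield w 0) v = -(Vfield v 0)) ∧
    (∀ v, lap2 (fun w => Vfield w 1) v = -(Vfield v 1)) ∧
    (∀ v, div2 Vfield v = 0) := by
  have F0 : (fun w : Fin 2 → ℝ => Vfield w 0) = fun w => Vx (w 0) (w 1) := by
    funext w; simp [Vfield]
  have F1 : (fun w : Fin 2 → ℝ => Vfield w 1) = fun w => Vx (w 1) (w 0) := by
    funext w; simp [Vfield]
  refine ⟨fun v => ?_, fun v => ?_, fun v => ?_⟩
  · rw [show lap2 (fun w => Vfield w 0) v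
        = pd2 0 (pd2 0 (fun w => Vfield w 0)) v + pd2 1 (pd2 1 (fun w => Vfield w 0)) v from rfl,
      F0, pd2_0_Vx, pd2_1_Vx, pd2_0_eq, pd2_1_eq,
      (hDx_x _ _).deriv, (hDy_y _ _).deriv]
    show Dxx (v 0) (v 1) + Dyy (v 0) (v 1) = -(Vfield v 0)
    rw [lap_sum]
    simp [Vfield]
  · rw [show lap2 (fun w => Vfield w 1) v
        = pd2 0 (pd2 0 (fun w => Vfield w 1)) v + pd2 1 (pd2 1 (fun w => Vfield w 1)) v from rfl,
      F1, pd2_0_Vx', pd2_1_Vx', pd2_0_eq', pd2_1_eq',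
      (hDy_y _ _).deriv, (hDx_x _ _).deriv]
    show Dyy (v 1) (v 0) + Dxx (v 1) (v 0) = -(Vfield v 1)
    rw [add_comm, lap_sum]
    simp [Vfield]
  · rw [show div2 Vfield v
        = pd2 0 (fun w => Vfield w 0) v + pd2 1 (fun w => Vfield w 1) v from rfl,
      F0, F1, pd2_0_eq, pd2_1_eq', (hVx_x _ _).deriv, (hVx_x _ _).deriv]
    unfold Dx; ring
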